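/- Let m ≥ 1 and let Σ₀, Ω₀, Σ be real symmetric m×m matrices such that Ω₀ and Σ are positive definite, Σ₀ is invertible, and let κ > 0. Suppose that for all vectors b, c ∈ ℝ^m one has (cᵀ Σ₀ b)² ≤ κ (cᵀ Ω₀ c)(bᵀ Σ b). Then the matrix Σ₀⁻¹ Ω₀ Σ₀⁻¹ − (κ Σ)⁻¹ is positive semidefinite. -/

import Mathlib

open Matrix

private lemma symm_dot {m : ℕ} (M : Matrix (Fin m) (Fin m) ℝ) (hM : M.IsSymm)
    (x y : Fin m → ℝ) : x ⬝ᵥ M *ᵥ y = (M *ᵥ x) ⬝ᵥ y := by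
  rw [dotProduct_mulVec, ← mulVec_transpose, hM.eq]

private lemma real_isHermitian_of_isSymm {m : ℕ} {M : Matrix (Fin m) (Fin m) ℝ}
    (hM : M.IsSymm) : M.IsHermitian := by
  rwa [Matrix.IsHermitian, conjTranspose_eq_transpose_of_trivial]

/-- From a pointwise Cauchy–Schwarz-type bound `(cᵀ Σ₀ b)² ≤ κ (cᵀ Ω₀ c)(bᵀ Σ b)`
one deduces the Loewner sandwich `Σ₀⁻¹ Ω₀ Σ₀⁻¹ ⪰ (κ Σ)⁻¹`. -/
theorem sandwich_of_cauchy_schwarz (m : ℕ) (hm : 1 ≤ m)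
    (S0 O0 S : Matrix (Fin m) (Fin m) ℝ)
    (hS0sym : S0.IsSymm) (hO0sym : O0.IsSymm) (hSsym : S.IsSymm)
    (hO0 : O0.PosDef) (hS : S.PosDef) (hS0 : IsUnit S0.det)
    (κ : ℝ) (hκ : 0 < κ)
    (h : ∀ b c : Fin m → ℝ,
      (c ⬝ᵥ S0.mulVec b) ^ 2 ≤ κ * (c ⬝ᵥ O0.mulVec c) * (b ⬝ᵥ S.mulVec b)) :
    (S0⁻¹ * O0 * S0⁻¹ - (κ • S)⁻¹).PosSemidef := by
  -- κ • S is positive definite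
  have hκS : (κ • S).PosDef := by
    refine PosDef.of_dotProduct_mulVec_pos (real_isHermitian_of_isSymm (by rw [Matrix.IsSymm, transpose_smul, hSsym.eq]))
      (fun x hx => ?_)
    have := hS.dotProduct_mulVec_pos hx
    simp only [smul_mulVec, dotProduct_smul, smul_eq_mul, star_trivial] at *
    positivity
  have hκSinv : ((κ • S)⁻¹).PosDef := hκS.inv
  -- symmetry facts
  have hS0inv : (S0⁻¹).IsSymm := by
    rw [Matrix.IsSymm, transpose_nonsing_inv, hS0sym.eq]
  have hκSinvSymm : ((κ • S)⁻¹).IsSymm := by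
    rw [Matrix.IsSymm, transpose_nonsing_inv, transpose_smul, hSsym.eq]
  refine PosSemidef.of_dotProduct_mulVec_nonneg ?_ ?_
  · refine real_isHermitian_of_isSymm ?_
    rw [Matrix.IsSymm, transpose_sub, transpose_mul, transpose_mul, hS0inv.eq, hO0sym.eq,
      hκSinvSymm.eq, Matrix.mul_assoc]
  · intro x
    simp only [star_trivial]
    by_cases hx : x = 0
    · simp [hx]
    -- abbreviations
    set b : Fin m → ℝ := (κ • S)⁻¹ *ᵥ x with hb
    set c : Fin m → ℝ := S0⁻¹ *ᵥ x with hc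
    set t : ℝ := x ⬝ᵥ (κ • S)⁻¹ *ᵥ x with ht
    have htpos : 0 < t := by simpa using hκSinv.dotProduct_mulVec_pos hx
    -- c ⬝ᵥ S0 *ᵥ b = t
    have h1 : c ⬝ᵥ S0 *ᵥ b = t := by
      rw [hc, ← symm_dot S0⁻¹ hS0inv, mulVec_mulVec, Matrix.nonsing_inv_mul S0 hS0,
        one_mulVec]
    -- c ⬝ᵥ O0 *ᵥ c = x ⬝ᵥ (S0⁻¹ * O0 * S0⁻¹) *ᵥ x
    have h2 : c ⬝ᵥ O0 *ᵥ c = x ⬝ᵥ (S0⁻¹ * O0 * S0⁻¹) *ᵥ x := by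
      rw [hc, ← symm_dot S0⁻¹ hS0inv, mulVec_mulVec, mulVec_mulVec]
    -- κ * (b ⬝ᵥ S *ᵥ b) = t
    have hSb : S *ᵥ b = κ⁻¹ • x := by
      have hdet : IsUnit (κ • S).det := isUnit_iff_ne_zero.mpr hκS.det_pos.ne'
      have hmul : (κ • S) * (κ • S)⁻¹ = 1 := Matrix.mul_nonsing_inv _ hdet
      have : κ • (S * (κ • S)⁻¹) = 1 := by rwa [← Matrix.smul_mul]
      have hSinv : S * (κ • S)⁻¹ = κ⁻¹ • (1 : Matrix (Fin m) (Fin m) ℝ) := by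
        calc S * (κ • S)⁻¹ = κ⁻¹ • (κ • (S * (κ • S)⁻¹)) := by
              rw [smul_smul, inv_mul_cancel₀ hκ.ne', one_smul]
          _ = κ⁻¹ • (1 : Matrix (Fin m) (Fin m) ℝ) := by rw [this]
      rw [hb, mulVec_mulVec, hSinv, smul_mulVec, one_mulVec]
    have h3 : κ * (b ⬝ᵥ S *ᵥ b) = t := by
      have hbd : b ⬝ᵥ S *ᵥ b = κ⁻¹ * t := by
        rw [hSb, dotProduct_smul, smul_eq_mul, hb, dotProduct_comm, ← ht]
      rw [hbd, ← mul_assoc, mul_inv_cancel₀ hκ.ne', one_mul]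
    -- apply the hypothesis
    have key := h b c
    rw [h1, h2] at key
    have key2 : t ^ 2 ≤ (x ⬝ᵥ (S0⁻¹ * O0 * S0⁻¹) *ᵥ x) * t := by
      calc t ^ 2 ≤ κ * (x ⬝ᵥ (S0⁻¹ * O0 * S0⁻¹) *ᵥ x) * (b ⬝ᵥ S *ᵥ b) := key
        _ = (x ⬝ᵥ (S0⁻¹ * O0 * S0⁻¹) *ᵥ x) * (κ * (b ⬝ᵥ S *ᵥ b)) := by ring
        _ = (x ⬝ᵥ (S0⁻¹ * O0 * S0⁻¹) *ᵥ x) * t := by rw [h3]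
    have hle : t ≤ x ⬝ᵥ (S0⁻¹ * O0 * S0⁻¹) *ᵥ x :=
      le_of_mul_le_mul_right (by rw [pow_two] at key2; exact key2) htpos
    rw [sub_mulVec, dotProduct_sub]
    linarith
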